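/- Let (p̂_j)_{0≤j≤k} be [0,1]-valued random variables, p ∈ [0,1], κ_j > 0 increasing in j, and ĵ the Lepskii selector ĵ := min{j : ∀ l > j, |p̂_j - p̂_l| < κ_l}. Then for any fixed j* ≤ k, E[(p̂_ĵ - p)² 1_{ĵ > j*}] ≤ Σ_{l ≥ j*} P(|p̂_l - p| ≥ κ_l/2). -/

import Mathlib

open MeasureTheory

/-- Lepskii rule, probabilistic bound on the bad event: with `[0,1]`-valued
estimators `p̂_j`, increasing penalties `κ_j > 0` and the Lepskii selector `ĵ`,
`E[(p̂_ĵ - p)² 1_{ĵ > j*}] ≤ Σ_{l ≥ j*} P(|p̂_l - p| ≥ κ_l/2)`. -/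
theorem lepskii_risk_bad_event
    {Ω : Type*} [MeasurableSpace Ω] (μ : Measure Ω) [IsProbabilityMeasure μ]
    (k : ℕ) (phat : ℕ → Ω → ℝ) (p : ℝ) (κ : ℕ → ℝ)
    (hmeas : ∀ j, Measurable (phat j))
    (hval : ∀ j ω, j ≤ k → phat j ω ∈ Set.Icc (0 : ℝ) 1)
    (hp : p ∈ Set.Icc (0 : ℝ) 1)
    (hκpos : ∀ j, j ≤ k → 0 < κ j)
    (hκmono : ∀ l j, l ≤ j → j ≤ k → κ l ≤ κ j)
    (jhat : Ω → ℕ)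
    (hjhat : ∀ ω, jhat ω
      = sInf {j : ℕ | j ≤ k ∧ ∀ l, j < l → l ≤ k → |phat j ω - phat l ω| < κ l})
    (jstar : ℕ) (hjstar : jstar ≤ k) :
    ∫ ω, (if jstar < jhat ω then (phat (jhat ω) ω - p) ^ 2 else 0) ∂μ
      ≤ ∑ l ∈ Finset.Icc jstar k, (μ {ω | κ l / 2 ≤ |phat l ω - p|}).toReal := by
  classical
  set S : Ω → Set ℕ :=
    fun ω => {j : ℕ | j ≤ k ∧ ∀ l, j < l → l ≤ k → |phat j ω - phat l ω| < κ l} with hSdef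
  have hkS : ∀ ω, k ∈ S ω := fun ω =>
    ⟨le_refl k, fun l hl hl' => absurd hl' (not_le.mpr hl)⟩
  have hjk : ∀ ω, jhat ω ≤ k := fun ω => by
    rw [hjhat]; exact Nat.sInf_le (hkS ω)
  set A : Set Ω := {ω | jstar < jhat ω} with hAdef
  set B : ℕ → Set Ω := fun l => {ω | κ l / 2 ≤ |phat l ω - p|} with hBdef
  have hBmeas : ∀ l, MeasurableSet (B l) := fun l =>
    measurableSet_le measurable_const ((hmeas l).sub measurable_const).abs
  -- characterization of A
  have hAiff : ∀ ω, ω ∈ A ↔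
      ∀ j, j ≤ jstar → ∃ l, j < l ∧ l ≤ k ∧ κ l ≤ |phat j ω - phat l ω| := by
    intro ω
    constructor
    · intro hω j hj
      have hjS : j ∉ S ω := by
        intro hmem
        have : jhat ω ≤ j := by rw [hjhat]; exact Nat.sInf_le hmem
        exact absurd (this.trans hj) (not_le.mpr hω)
      simp only [hSdef, Set.mem_setOf_eq, not_and, not_forall, not_lt] at hjS
      obtain ⟨l, hl1, hl2, hl3⟩ := hjS (hj.trans hjstar)
      exact ⟨l, hl1, hl2, hl3⟩
    · intro h
      show jstar < jhat ω
      rw [hjhat]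
      by_contra hcon
      push_neg at hcon
      have hmem : sInf (S ω) ∈ S ω := Nat.sInf_mem ⟨k, hkS ω⟩
      obtain ⟨l, hl1, hl2, hl3⟩ := h _ hcon
      exact absurd (hmem.2 l hl1 hl2) (not_lt.mpr hl3)
  have hAmeas : MeasurableSet A := by
    have : A = ⋂ j ∈ Finset.range (jstar + 1),
        ⋃ l ∈ Finset.Ioc j k, {ω | κ l ≤ |phat j ω - phat l ω|} := by
      ext ω
      simp only [Set.mem_iInter, Set.mem_iUnion, Finset.mem_range, Finset.mem_Ioc,
        Nat.lt_succ_iff, Set.mem_setOf_eq]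
      rw [hAiff ω]
      constructor
      · intro h j hj
        obtain ⟨l, h1, h2, h3⟩ := h j hj
        exact ⟨l, ⟨h1, h2⟩, h3⟩
      · intro h j hj
        obtain ⟨l, ⟨h1, h2⟩, h3⟩ := h j hj
        exact ⟨l, h1, h2, h3⟩
    rw [this]
    refine Finset.measurableSet_biInter _ fun j _ => ?_
    refine Finset.measurableSet_biUnion _ fun l _ => ?_
    exact measurableSet_le measurable_const ((hmeas j).sub (hmeas l)).abs
  -- event inclusion
  have hAsub : A ⊆ ⋃ l ∈ Finset.Icc jstar k, B l := by
    intro ω hω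
    obtain ⟨l, hl1, hl2, hl3⟩ := (hAiff ω).mp hω jstar le_rfl
    by_cases hc : κ l / 2 ≤ |phat l ω - p|
    · exact Set.mem_biUnion (Finset.mem_Icc.mpr ⟨hl1.le, hl2⟩) hc
    · push_neg at hc
      have htri : |phat jstar ω - phat l ω| ≤ |phat jstar ω - p| + |phat l ω - p| := by
        have := abs_sub (phat jstar ω - p) (phat l ω - p)
        calc |phat jstar ω - phat l ω| = |(phat jstar ω - p) - (phat l ω - p)| := by ring_nf
          _ ≤ |phat jstar ω - p| + |phat l ω - p| := abs_sub _ _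
      have h1 : κ l / 2 ≤ |phat jstar ω - p| := by linarith
      have h2 : κ jstar / 2 ≤ |phat jstar ω - p| := by
        have := hκmono jstar l hl1.le hl2
        linarith
      exact Set.mem_biUnion (Finset.mem_Icc.mpr ⟨le_rfl, hjstar⟩) h2
  -- pointwise bound by indicator
  have hpoint : ∀ ω, (if jstar < jhat ω then (phat (jhat ω) ω - p) ^ 2 else 0)
      ≤ A.indicator (fun _ => (1 : ℝ)) ω := by
    intro ω
    by_cases h : jstar < jhat ω
    · rw [if_pos h, Set.indicator_of_mem (show ω ∈ A from h)]
      obtain ⟨hx0, hx1⟩ := hval (jhat ω) ω (hjk ω)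
      obtain ⟨hp0, hp1⟩ := hp
      nlinarith
    · rw [if_neg h]
      exact Set.indicator_nonneg (fun _ _ => zero_le_one) ω
  have hnonneg : ∀ ω, 0 ≤ (if jstar < jhat ω then (phat (jhat ω) ω - p) ^ 2 else 0) := by
    intro ω; split <;> positivity
  calc ∫ ω, (if jstar < jhat ω then (phat (jhat ω) ω - p) ^ 2 else 0) ∂μ
      ≤ ∫ ω, A.indicator (fun _ => (1 : ℝ)) ω ∂μ := by
        refine integral_mono_of_nonneg (Filter.Eventually.of_forall hnonneg)
          ((integrable_const 1).indicator hAmeas) (Filter.Eventually.of_forall hpoint)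
    _ = (μ A).toReal := by
        rw [integral_indicator hAmeas]
        simp [Measure.real]
    _ ≤ (∑ l ∈ Finset.Icc jstar k, μ (B l)).toReal := by
        refine ENNReal.toReal_mono (ENNReal.sum_ne_top.mpr fun l _ => measure_ne_top μ _) ?_
        exact (measure_mono hAsub).trans (measure_biUnion_finset_le _ _)
    _ = ∑ l ∈ Finset.Icc jstar k, (μ (B l)).toReal :=
        ENNReal.toReal_sum fun l _ => measure_ne_top μ _
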